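/- arXiv:2407.17051 — 3 statements merged into one kernel-verified Lean document; each statement's English description precedes it below -/
import Mathlib

section
/- Let D be an oriented graph (a digraph with no loops and at most one arc between any pair of vertices) that is converse invariant, i.e., for every tournament T on any finite vertex set, the number of subdigraphs of T isomorphic to D equals the number isomorphic to the converse -D. Then the polynomials P_D(x) = ∑_{u ∈ V(D)} (1+x)^{d⁺(u)} (1−x)^{d⁻(u)} and P_{−D}(x) = ∑_{u ∈ V(D)} (1+x)^{d⁻(u)} (1−x)^{d⁺(u)} are equal as polynomials in x. -/
open Finset Polynomial

/-- An oriented graph: loopless, at most one arc between any pair of vertices. -/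
def IsOrgraph {V : Type*} (A : V → V → Prop) : Prop :=
  ∀ u v, A u v → u ≠ v ∧ ¬ A v u

/-- A tournament: loopless, exactly one arc between any two distinct vertices. -/
def IsTournament {W : Type*} (B : W → W → Prop) : Prop :=
  (∀ v, ¬ B v v) ∧ ∀ u v, u ≠ v → (B u v ↔ ¬ B v u)

/-- The number of subdigraphs of `B` isomorphic to `A`: a subdigraph is a pair of a
vertex set and an arc relation contained in `B` with all endpoints in the vertex set. -/
noncomputable def copyCount {V W : Type*} (A : V → V → Prop) (B : W → W → Prop) : ℕ :=
  Nat.card {p : Set W × (W → W → Prop) //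
    (∀ a b, p.2 a b → B a b ∧ a ∈ p.1 ∧ b ∈ p.1) ∧
    ∃ e : V ≃ p.1, ∀ a b, A a b ↔ p.2 (e a : W) (e b : W)}

/-- `A` is converse invariant: every finite tournament contains as many copies of `A`
as of its converse. -/
def ConverseInvariant {V : Type*} (A : V → V → Prop) : Prop :=
  ∀ (W : Type) (_ : Fintype W) (B : W → W → Prop), IsTournament B →
    copyCount A B = copyCount (fun a b => A b a) B

/-- Out-degree. -/
noncomputable def outDeg {V : Type*} (A : V → V → Prop) (u : V) : ℕ :=
  Nat.card {v // A u v}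

/-- In-degree. -/
noncomputable def inDeg {V : Type*} (A : V → V → Prop) (u : V) : ℕ :=
  Nat.card {v // A v u}

/-- The polynomial `P_D(x) = ∑_u (1+x)^{d⁺(u)} (1-x)^{d⁻(u)}`. -/
noncomputable def degPoly {V : Type*} [Fintype V] (A : V → V → Prop) : Polynomial ℤ :=
  ∑ u : V, (1 + X) ^ outDeg A u * (1 - X) ^ inDeg A u

/-- `A` is an orientation of the simple graph `G`. -/
def IsOrientation {V : Type*} (G : SimpleGraph V) (A : V → V → Prop) : Prop :=
  (∀ u v, A u v → ¬ A v u) ∧ ∀ u v, G.Adj u v ↔ (A u v ∨ A v u)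


attribute [local instance] Classical.propDecidable

namespace CIP

variable {V : Type} [Fintype V]

/-- rank of an element of `Option V`, used to sort pairs. -/
noncomputable def rk (a : Option V) : ℕ :=
  match a with
  | none => 0
  | some v => (Fintype.equivFin V v : ℕ) + 1

lemma rk_inj : Function.Injective (rk (V := V)) := by
  intro a b h
  match a, b with
  | none, none => rfl
  | none, some v => simp [rk] at h
  | some v, none => simp [rk] at h
  | some v, some w =>
    simp only [rk, Nat.add_right_cancel_iff] at h
    exact congrArg _ ((Fintype.equivFin V).injective (Fin.val_injective h))

lemma rk_pos {a : Option V} (h : a ≠ none) : 0 < rk a := by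
  match a with
  | none => exact absurd rfl h
  | some v => simp [rk]

/-- sorted pairs of distinct elements of `Option V`. -/
def Pairs (V : Type) [Fintype V] : Type := {p : Option V × Option V // rk p.1 < rk p.2}

noncomputable instance : Fintype (Pairs V) := by unfold Pairs; infer_instance

lemma pairs_snd_ne_none (e : Pairs V) : e.val.2 ≠ none := by
  intro h
  have := e.prop
  rw [h] at this
  simp [rk] at this

/-- the tournament determined by an orientation choice `g`. -/
noncomputable def tourn (g : Pairs V → Bool) : Option V → Option V → Prop :=
  fun a b =>
    if h : rk a < rk b then g ⟨(a, b), h⟩ = true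
    else if h' : rk b < rk a then g ⟨(b, a), h'⟩ = false
    else False

lemma tourn_isTournament (g : Pairs V → Bool) : IsTournament (tourn g) := by
  constructor
  · intro v
    simp [tourn]
  · intro a b hab
    have hne : rk a ≠ rk b := fun h => hab (rk_inj h)
    rcases lt_or_gt_of_ne hne with h | h
    · rw [tourn, tourn, dif_pos h, dif_neg (lt_asymm h), dif_pos h]
      simp
    · rw [tourn, tourn, dif_neg (lt_asymm h), dif_pos h, dif_pos h]
      simp

-- PART2 (inside namespace CIP)

def embCond (R : V → V → Prop) (B : Option V → Option V → Prop) (φ : V ↪ Option V) : Prop :=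
  ∀ u v, R u v → B (φ u) (φ v)

def EmbT (R : V → V → Prop) (B : Option V → Option V → Prop) : Type :=
  {φ : V ↪ Option V // embCond R B φ}

def AutT (R : V → V → Prop) : Type :=
  {α : V ≃ V // ∀ u v, R u v ↔ R (α u) (α v)}

def CopiesT (R : V → V → Prop) (B : Option V → Option V → Prop) : Type :=
  {p : Set (Option V) × (Option V → Option V → Prop) //
    (∀ a b, p.2 a b → B a b ∧ a ∈ p.1 ∧ b ∈ p.1) ∧
    ∃ e : V ≃ p.1, ∀ a b, R a b ↔ p.2 (e a : Option V) (e b : Option V)}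

lemma copyCount_eq (R : V → V → Prop) (B : Option V → Option V → Prop) :
    copyCount R B = Nat.card (CopiesT R B) := rfl

noncomputable instance finProp : Fintype Prop := inferInstance

instance finEmbOV : Finite (V ↪ Option V) :=
  Finite.of_injective (fun f => (f : V → Option V)) (fun _ _ h => DFunLike.coe_injective h)

instance finEmbT (R : V → V → Prop) (B : Option V → Option V → Prop) : Finite (EmbT R B) := by
  unfold EmbT; infer_instance

instance finAutT (R : V → V → Prop) : Finite (AutT R) := by
  unfold AutT
  have : Finite (V ≃ V) := inferInstance
  infer_instance

instance finCopiesT (R : V → V → Prop) (B : Option V → Option V → Prop) :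
    Finite (CopiesT R B) := by
  unfold CopiesT; infer_instance

/-- choice of an isomorphism onto a copy -/
noncomputable def chi {R : V → V → Prop} {B : Option V → Option V → Prop}
    (c : CopiesT R B) : V ≃ c.val.1 := c.prop.2.choose

lemma chi_spec {R : V → V → Prop} {B : Option V → Option V → Prop} (c : CopiesT R B) :
    ∀ a b, R a b ↔ c.val.2 (chi c a : Option V) (chi c b : Option V) := c.prop.2.choose_spec

noncomputable def bwdMap {R : V → V → Prop} {B : Option V → Option V → Prop}
    (x : CopiesT R B × AutT R) : EmbT R B :=
  ⟨⟨fun w => (chi x.1 (x.2.val w) : Option V),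
    fun a b h => x.2.val.injective ((chi x.1).injective (Subtype.coe_injective h))⟩,
    by
      intro u v hR
      have h1 := (x.2.prop u v).mp hR
      have h2 := (chi_spec x.1 (x.2.val u) (x.2.val v)).mp h1
      exact (x.1.prop.1 _ _ h2).1⟩

lemma bwdMap_inj {R : V → V → Prop} {B : Option V → Option V → Prop} :
    Function.Injective (bwdMap (R := R) (B := B)) := by
  rintro ⟨c, α⟩ ⟨c', α'⟩ h
  have hw : ∀ w, (chi c (α.val w) : Option V) = (chi c' (α'.val w) : Option V) := by
    intro w
    exact congrArg (fun (f : EmbT R B) => f.val w) h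
  -- sets are equal
  have hset : c.val.1 = c'.val.1 := by
    apply Set.eq_of_subset_of_subset
    · intro a ha
      have : a = (chi c (α.val (α.val.symm ((chi c).symm ⟨a, ha⟩))) : Option V) := by
        simp
      rw [this, hw]
      exact (chi c' _).2
    · intro a ha
      have : a = (chi c' (α'.val (α'.val.symm ((chi c').symm ⟨a, ha⟩))) : Option V) := by
        simp
      rw [this, ← hw]
      exact (chi c _).2
  -- relations are equal
  have hrel : c.val.2 = c'.val.2 := by
    funext a b
    apply propext
    constructor
    · intro hab
      have ha : a ∈ c.val.1 := (c.prop.1 a b hab).2.1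
      have hb : b ∈ c.val.1 := (c.prop.1 a b hab).2.2
      set x := (chi c).symm ⟨a, ha⟩ with hx
      set y := (chi c).symm ⟨b, hb⟩ with hy
      have hax : (chi c x : Option V) = a := by rw [hx]; simp
      have hby : (chi c y : Option V) = b := by rw [hy]; simp
      have hRxy : R x y := by
        rw [chi_spec c x y, hax, hby]; exact hab
      have hR2 : R (α.val.symm x) (α.val.symm y) := by
        have := (α.prop (α.val.symm x) (α.val.symm y)).mpr
        simp at this
        exact this hRxy
      have hR3 : R (α'.val (α.val.symm x)) (α'.val (α.val.symm y)) :=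
        (α'.prop _ _).mp hR2
      have ea : (chi c' (α'.val (α.val.symm x)) : Option V) = a := by
        rw [← hw (α.val.symm x), Equiv.apply_symm_apply, hax]
      have eb : (chi c' (α'.val (α.val.symm y)) : Option V) = b := by
        rw [← hw (α.val.symm y), Equiv.apply_symm_apply, hby]
      rw [← ea, ← eb]
      exact (chi_spec c' _ _).mp hR3
    · intro hab
      have ha : a ∈ c'.val.1 := (c'.prop.1 a b hab).2.1
      have hb : b ∈ c'.val.1 := (c'.prop.1 a b hab).2.2
      set x := (chi c').symm ⟨a, ha⟩ with hx
      set y := (chi c').symm ⟨b, hb⟩ with hy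
      have hax : (chi c' x : Option V) = a := by rw [hx]; simp
      have hby : (chi c' y : Option V) = b := by rw [hy]; simp
      have hRxy : R x y := by
        rw [chi_spec c' x y, hax, hby]; exact hab
      have hR2 : R (α'.val.symm x) (α'.val.symm y) := by
        have := (α'.prop (α'.val.symm x) (α'.val.symm y)).mpr
        simp at this
        exact this hRxy
      have hR3 : R (α.val (α'.val.symm x)) (α.val (α'.val.symm y)) :=
        (α.prop _ _).mp hR2
      have ea : (chi c (α.val (α'.val.symm x)) : Option V) = a := by
        rw [hw (α'.val.symm x), Equiv.apply_symm_apply, hax]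
      have eb : (chi c (α.val (α'.val.symm y)) : Option V) = b := by
        rw [hw (α'.val.symm y), Equiv.apply_symm_apply, hby]
      rw [← ea, ← eb]
      exact (chi_spec c _ _).mp hR3
  have hc : c = c' := Subtype.ext (Prod.ext hset hrel)
  subst hc
  have hα : α = α' := by
    apply Subtype.ext
    apply Equiv.ext
    intro w
    exact (chi c).injective (Subtype.coe_injective (hw w))
  rw [hα]

noncomputable def copyOf {R : V → V → Prop} {B : Option V → Option V → Prop}
    (φ : EmbT R B) : CopiesT R B :=
  ⟨(Set.range φ.val, fun a b => ∃ u v, R u v ∧ φ.val u = a ∧ φ.val v = b), by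
    constructor
    · rintro a b ⟨u, v, hR, rfl, rfl⟩
      exact ⟨φ.prop u v hR, Set.mem_range_self u, Set.mem_range_self v⟩
    · refine ⟨Equiv.ofInjective φ.val φ.val.injective, fun a b => ?_⟩
      constructor
      · intro h
        exact ⟨a, b, h, rfl, rfl⟩
      · rintro ⟨u, v, hR, hu, hv⟩
        have : φ.val u = φ.val a := hu
        have hua : u = a := φ.val.injective this
        have hvb : v = b := φ.val.injective hv
        rwa [hua, hvb] at hR⟩

noncomputable def fwdMap {R : V → V → Prop} {B : Option V → Option V → Prop}
    (φ : EmbT R B) : CopiesT R B × AutT R :=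
  ⟨copyOf φ,
   ⟨(Equiv.ofInjective φ.val φ.val.injective).trans (chi (copyOf φ)).symm, by
      intro u v
      have hs := chi_spec (copyOf φ)
      have key : ∀ w, (chi (copyOf φ)
          ((Equiv.ofInjective φ.val φ.val.injective).trans (chi (copyOf φ)).symm w)
            : Option V) = φ.val w := by
        intro w
        exact congrArg Subtype.val
          (Equiv.apply_symm_apply (chi (copyOf φ)) ((Equiv.ofInjective φ.val φ.val.injective) w))
      constructor
      · intro h
        rw [hs, key, key]
        exact ⟨u, v, h, rfl, rfl⟩
      · intro h
        rw [hs, key, key] at h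
        obtain ⟨u', v', hR, hu, hv⟩ := h
        rwa [φ.val.injective hu, φ.val.injective hv] at hR⟩⟩

lemma fwdMap_bwdMap {R : V → V → Prop} {B : Option V → Option V → Prop}
    (φ : EmbT R B) : bwdMap (fwdMap φ) = φ := by
  apply Subtype.ext
  apply Function.Embedding.ext
  intro w
  show (chi (copyOf φ) ((fwdMap φ).2.val w) : Option V) = φ.val w
  show (chi (copyOf φ)
      ((Equiv.ofInjective φ.val φ.val.injective).trans (chi (copyOf φ)).symm w)
        : Option V) = φ.val w
  exact congrArg Subtype.val
    (Equiv.apply_symm_apply (chi (copyOf φ)) ((Equiv.ofInjective φ.val φ.val.injective) w))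

lemma card_emb (R : V → V → Prop) (B : Option V → Option V → Prop) :
    Nat.card (EmbT R B) = copyCount R B * Nat.card (AutT R) := by
  rw [copyCount_eq, ← Nat.card_prod]
  have h1 : Nat.card (EmbT R B) ≤ Nat.card (CopiesT R B × AutT R) :=
    Nat.card_le_card_of_injective fwdMap (by
      intro a b h
      rw [← fwdMap_bwdMap a, ← fwdMap_bwdMap b, h])
  have h2 : Nat.card (CopiesT R B × AutT R) ≤ Nat.card (EmbT R B) :=
    Nat.card_le_card_of_injective bwdMap bwdMap_inj
  omega

lemma card_aut_conv (R : V → V → Prop) :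
    Nat.card (AutT R) = Nat.card (AutT (fun a b => R b a)) := by
  apply Nat.card_congr
  apply Equiv.subtypeEquivRight
  intro α
  constructor
  · intro h u v; exact h v u
  · intro h u v; exact h v u


def fwdP (R : V → V → Prop) (φ : V ↪ Option V) (e : Pairs V) : Prop :=
  ∃ u v, R u v ∧ φ u = e.val.1 ∧ φ v = e.val.2

def bwdP (R : V → V → Prop) (φ : V ↪ Option V) (e : Pairs V) : Prop :=
  ∃ u v, R u v ∧ φ u = e.val.2 ∧ φ v = e.val.1

lemma fwdP_conv (R : V → V → Prop) (φ : V ↪ Option V) (e : Pairs V) :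
    fwdP (fun a b => R b a) φ e ↔ bwdP R φ e := by
  constructor
  · rintro ⟨u, v, h, h1, h2⟩; exact ⟨v, u, h, h2, h1⟩
  · rintro ⟨u, v, h, h1, h2⟩; exact ⟨v, u, h, h2, h1⟩

lemma bwdP_conv (R : V → V → Prop) (φ : V ↪ Option V) (e : Pairs V) :
    bwdP (fun a b => R b a) φ e ↔ fwdP R φ e := by
  constructor
  · rintro ⟨u, v, h, h1, h2⟩; exact ⟨v, u, h, h2, h1⟩
  · rintro ⟨u, v, h, h1, h2⟩; exact ⟨v, u, h, h2, h1⟩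

lemma not_fwd_bwd {R : V → V → Prop} (hR : IsOrgraph R) (φ : V ↪ Option V) (e : Pairs V) :
    ¬ (fwdP R φ e ∧ bwdP R φ e) := by
  rintro ⟨⟨u, v, h, h1, h2⟩, ⟨u', v', h', h1', h2'⟩⟩
  have : u = v' := φ.injective (h1.trans h2'.symm)
  have : v = u' := φ.injective (h2.trans h1'.symm)
  subst this; subst ‹u = v'›
  exact (hR _ _ h).2 h'

def indP (R : V → V → Prop) (φ : V ↪ Option V) (e : Pairs V) (b : Bool) : Prop :=
  (fwdP R φ e → b = true) ∧ (bwdP R φ e → b = false)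

noncomputable def wfac (e : Pairs V) (b : Bool) : Polynomial ℤ :=
  if e.val.1 = none then (if b then 1 + X else 1 - X) else 1

noncomputable def Gfac (R : V → V → Prop) (φ : V ↪ Option V) (e : Pairs V) : Polynomial ℤ :=
  wfac e true * (if indP R φ e true then 1 else 0) +
    wfac e false * (if indP R φ e false then 1 else 0)

lemma Gfac_eq {R : V → V → Prop} (hR : IsOrgraph R) (φ : V ↪ Option V) (e : Pairs V) :
    Gfac R φ e = if fwdP R φ e then wfac e true else
      if bwdP R φ e then wfac e false else wfac e true + wfac e false := by
  have hind1 : indP R φ e true ↔ ¬ bwdP R φ e := by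
    unfold indP; simp
  have hind2 : indP R φ e false ↔ ¬ fwdP R φ e := by
    unfold indP; simp
  unfold Gfac
  rw [if_congr hind1 rfl rfl, if_congr hind2 rfl rfl]
  by_cases hf : fwdP R φ e
  · have hb : ¬ bwdP R φ e := fun hb => not_fwd_bwd hR φ e ⟨hf, hb⟩
    simp [hf, hb]
  · by_cases hb : bwdP R φ e
    · simp [hf, hb]
    · simp [hf, hb]

lemma embCond_iff {R : V → V → Prop} (hR : IsOrgraph R) (g : Pairs V → Bool)
    (φ : V ↪ Option V) :
    embCond R (tourn g) φ ↔ ∀ e : Pairs V, indP R φ e (g e) := by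
  constructor
  · intro h e
    constructor
    · rintro ⟨u, v, hR', hu, hv⟩
      have hB := h u v hR'
      rw [hu, hv] at hB
      unfold tourn at hB
      rw [dif_pos e.prop] at hB
      exact hB
    · rintro ⟨u, v, hR', hu, hv⟩
      have hB := h u v hR'
      rw [hu, hv] at hB
      unfold tourn at hB
      rw [dif_neg (lt_asymm e.prop), dif_pos e.prop] at hB
      exact hB
  · intro h u v hR'
    have hne : u ≠ v := (hR u v hR').1
    have hne' : rk (φ u) ≠ rk (φ v) := fun hh => hne (φ.injective (rk_inj hh))
    rcases lt_or_gt_of_ne hne' with hlt | hlt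
    · have := (h ⟨(φ u, φ v), hlt⟩).1 ⟨u, v, hR', rfl, rfl⟩
      unfold tourn
      rw [dif_pos hlt]
      exact this
    · have := (h ⟨(φ v, φ u), hlt⟩).2 ⟨u, v, hR', rfl, rfl⟩
      unfold tourn
      rw [dif_neg (lt_asymm hlt), dif_pos hlt]
      exact this

noncomputable instance instFinEmbT (R : V → V → Prop) (B : Option V → Option V → Prop) :
    Fintype (EmbT R B) := by
  unfold EmbT; infer_instance

lemma sum_funBool (F : Pairs V → Bool → Polynomial ℤ) :
    ∑ g : Pairs V → Bool, ∏ e : Pairs V, F e (g e) =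
      ∏ e : Pairs V, (F e true + F e false) := by
  have h1 : ∏ e : Pairs V, (F e true + F e false) = ∏ e : Pairs V, ∑ b : Bool, F e b := by
    apply Finset.prod_congr rfl
    intro e _
    rw [Fintype.sum_bool]
  rw [h1, Finset.prod_univ_sum (fun _ => (univ : Finset Bool)) F, Fintype.piFinset_univ]

noncomputable def Sval (R : V → V → Prop) : Polynomial ℤ :=
  ∑ g : Pairs V → Bool,
    (∏ e : Pairs V, wfac e (g e)) * (Nat.card (EmbT R (tourn g)) : Polynomial ℤ)

lemma Sval_eq {R : V → V → Prop} (hR : IsOrgraph R) :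
    Sval R = ∑ φ : V ↪ Option V, ∏ e : Pairs V, Gfac R φ e := by
  have step1 : ∀ g : Pairs V → Bool,
      (Nat.card (EmbT R (tourn g)) : Polynomial ℤ) =
        ∑ φ : V ↪ Option V, ∏ e : Pairs V, (if indP R φ e (g e) then 1 else 0) := by
    intro g
    have : Nat.card (EmbT R (tourn g)) =
        (univ.filter (fun φ : V ↪ Option V => embCond R (tourn g) φ)).card := by
      rw [Nat.card_eq_fintype_card]
      exact Fintype.card_subtype _
    rw [this, ← Finset.sum_boole]
    apply Finset.sum_congr rfl
    intro φ _
    rw [Finset.prod_boole]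
    by_cases hcond : embCond R (tourn g) φ
    · rw [if_pos hcond, if_pos (fun e _ => ((embCond_iff hR g φ).mp hcond e))]
    · rw [if_neg hcond, if_neg
        (fun hh => hcond ((embCond_iff hR g φ).mpr (fun e => hh e (Finset.mem_univ e))))]
  unfold Sval
  calc ∑ g : Pairs V → Bool,
      (∏ e : Pairs V, wfac e (g e)) * (Nat.card (EmbT R (tourn g)) : Polynomial ℤ)
      = ∑ g : Pairs V → Bool, ∑ φ : V ↪ Option V,
          ∏ e : Pairs V, (wfac e (g e) * (if indP R φ e (g e) then 1 else 0)) := by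
        apply Finset.sum_congr rfl
        intro g _
        rw [step1 g, Finset.mul_sum]
        apply Finset.sum_congr rfl
        intro φ _
        rw [← Finset.prod_mul_distrib]
    _ = ∑ φ : V ↪ Option V, ∑ g : Pairs V → Bool,
          ∏ e : Pairs V, (wfac e (g e) * (if indP R φ e (g e) then 1 else 0)) :=
        Finset.sum_comm
    _ = ∑ φ : V ↪ Option V, ∏ e : Pairs V, Gfac R φ e := by
        apply Finset.sum_congr rfl
        intro φ _
        exact sum_funBool (fun e b => wfac e b * (if indP R φ e b then 1 else 0))

lemma Gfac_cases {R : V → V → Prop} (hR : IsOrgraph R) (φ : V ↪ Option V) (e : Pairs V) :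
    Gfac R φ e = if e.val.1 = none ∧ fwdP R φ e then 1 + X else
      if e.val.1 = none ∧ bwdP R φ e then 1 - X else
        if fwdP R φ e ∨ bwdP R φ e then 1 else 2 := by
  rw [Gfac_eq hR φ e]
  by_cases hn : e.val.1 = none
  · by_cases hf : fwdP R φ e
    · have hb : ¬ bwdP R φ e := fun hb => not_fwd_bwd hR φ e ⟨hf, hb⟩
      simp [hf, hb, hn, wfac]
    · by_cases hb : bwdP R φ e
      · simp [hf, hb, hn, wfac]
      · simp [hf, hb, hn, wfac]
        ring
  · by_cases hf : fwdP R φ e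
    · simp [hf, hn, wfac]
    · by_cases hb : bwdP R φ e
      · simp [hf, hb, hn, wfac]
      · simp [hf, hb, hn, wfac]
        ring

lemma case1_pointwise {A : V → V → Prop} (hA : IsOrgraph A) (hA' : IsOrgraph (fun a b => A b a))
    (φ : V ↪ Option V) (hφ : ∀ u, φ u ≠ none) (e : Pairs V) :
    Gfac (fun a b => A b a) φ e = Gfac A φ e := by
  rw [Gfac_cases hA φ e, Gfac_cases hA' φ e]
  by_cases hn : e.val.1 = none
  · have hf : ¬ fwdP A φ e := by
      rintro ⟨u, v, h, h1, h2⟩; exact hφ u (h1.trans hn)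
    have hb : ¬ bwdP A φ e := by
      rintro ⟨u, v, h, h1, h2⟩; exact hφ v (h2.trans hn)
    have hf' : ¬ fwdP (fun a b => A b a) φ e := fun h => hb ((fwdP_conv A φ e).mp h)
    have hb' : ¬ bwdP (fun a b => A b a) φ e := fun h => hf ((bwdP_conv A φ e).mp h)
    simp [hf, hb, hf', hb']
  · simp only [hn, false_and, if_false]
    simp only [fwdP_conv A φ e, bwdP_conv A φ e]
    by_cases hf : fwdP A φ e <;> by_cases hb : bwdP A φ e <;> simp [hf, hb]

lemma outDeg_card (R : V → V → Prop) (u : V) :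
    outDeg R u = (univ.filter (fun v => R u v)).card := by
  rw [outDeg, Nat.card_eq_fintype_card]
  exact Fintype.card_subtype _

lemma inDeg_card (R : V → V → Prop) (u : V) :
    inDeg R u = (univ.filter (fun v => R v u)).card := by
  rw [inDeg, Nat.card_eq_fintype_card]
  exact Fintype.card_subtype _

lemma rk_none : rk (none : Option V) = 0 := rfl

lemma mem_filter_any {α : Type*} {s : Finset α} {p : α → Prop} {inst : DecidablePred p}
    {a : α} : a ∈ @Finset.filter α p inst s ↔ a ∈ s ∧ p a := Finset.mem_filter

lemma card_fwd_none {R : V → V → Prop} (hR : IsOrgraph R) {φ : V ↪ Option V} {u : V}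
    (hu : φ u = none) :
    (univ.filter (fun e : Pairs V => e.val.1 = none ∧ fwdP R φ e)).card = outDeg R u := by
  rw [outDeg_card]
  symm
  have hne : ∀ v, R u v → φ v ≠ none := by
    intro v hv h
    exact (hR u v hv).1 (φ.injective (hu.trans h.symm))
  apply Finset.card_bij (fun v hv => (⟨(none, φ v), by
    have : R u v := (Finset.mem_filter.mp hv).2
    exact rk_pos (hne v this)⟩ : Pairs V))
  · intro v hv
    have hRv : R u v := (Finset.mem_filter.mp hv).2
    refine mem_filter_any.mpr ⟨Finset.mem_univ _, rfl, u, v, hRv, hu, rfl⟩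
  · intro v hv v' hv' h
    have := congrArg (fun e : Pairs V => e.val.2) h
    exact φ.injective this
  · intro e he
    obtain ⟨-, hn, w, w', hRw, hw, hw'⟩ := mem_filter_any.mp he
    have hwu : w = u := φ.injective (hw.trans (hn.trans hu.symm))
    subst hwu
    refine ⟨w', Finset.mem_filter.mpr ⟨Finset.mem_univ _, hRw⟩, ?_⟩
    apply Subtype.ext
    show (none, φ w') = e.val
    rw [hw', ← hn]
  
lemma card_bwd_none {R : V → V → Prop} (hR : IsOrgraph R) {φ : V ↪ Option V} {u : V}
    (hu : φ u = none) :
    (univ.filter (fun e : Pairs V => e.val.1 = none ∧ bwdP R φ e)).card = inDeg R u := by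
  rw [inDeg_card]
  symm
  have hne : ∀ v, R v u → φ v ≠ none := by
    intro v hv h
    exact (hR v u hv).1 (φ.injective (h.trans hu.symm))
  apply Finset.card_bij (fun v hv => (⟨(none, φ v), by
    have : R v u := (Finset.mem_filter.mp hv).2
    exact rk_pos (hne v this)⟩ : Pairs V))
  · intro v hv
    have hRv : R v u := (Finset.mem_filter.mp hv).2
    refine mem_filter_any.mpr ⟨Finset.mem_univ _, rfl, v, u, hRv, rfl, hu⟩
  · intro v hv v' hv' h
    have := congrArg (fun e : Pairs V => e.val.2) h
    exact φ.injective this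
  · intro e he
    obtain ⟨-, hn, w, w', hRw, hw, hw'⟩ := mem_filter_any.mp he
    have hwu : w' = u := φ.injective (hw'.trans (hn.trans hu.symm))
    subst hwu
    refine ⟨w, Finset.mem_filter.mpr ⟨Finset.mem_univ _, hRw⟩, ?_⟩
    apply Subtype.ext
    show (none, φ w) = e.val
    rw [hw, ← hn]

noncomputable def mcard (R : V → V → Prop) : ℕ :=
  (univ.filter (fun p : V × V => R p.1 p.2)).card

noncomputable def frcard (R : V → V → Prop) (φ : V ↪ Option V) : ℕ :=
  (univ.filter (fun e : Pairs V => ¬ (fwdP R φ e ∨ bwdP R φ e))).card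

lemma mcard_conv (A : V → V → Prop) : mcard (fun a b => A b a) = mcard A := by
  unfold mcard
  apply Finset.card_bij (fun p _ => (p.2, p.1))
  · intro p hp
    exact Finset.mem_filter.mpr ⟨Finset.mem_univ _, (Finset.mem_filter.mp hp).2⟩
  · intro p hp q hq h
    obtain ⟨h1, h2⟩ := Prod.mk.injEq .. ▸ h
    · exact Prod.ext h2 h1
  · intro p hp
    exact ⟨(p.2, p.1), Finset.mem_filter.mpr ⟨Finset.mem_univ _,
      (Finset.mem_filter.mp hp).2⟩, rfl⟩

lemma frcard_conv (A : V → V → Prop) (φ : V ↪ Option V) :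
    frcard (fun a b => A b a) φ = frcard A φ := by
  unfold frcard
  apply congrArg
  apply Finset.filter_congr
  intro e _
  simp only [fwdP_conv A φ e, bwdP_conv A φ e, or_comm]

lemma forced_card {R : V → V → Prop} (hR : IsOrgraph R) (φ : V ↪ Option V) :
    (univ.filter (fun e : Pairs V => fwdP R φ e ∨ bwdP R φ e)).card = mcard R := by
  unfold mcard
  symm
  have hkey : ∀ p : V × V, R p.1 p.2 → rk (φ p.1) ≠ rk (φ p.2) := by
    intro p hp h
    exact (hR _ _ hp).1 (φ.injective (rk_inj h))
  apply Finset.card_bij (fun (p : V × V) (hp : p ∈ univ.filter (fun p : V × V => R p.1 p.2)) =>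
    if h : rk (φ p.1) < rk (φ p.2) then (⟨(φ p.1, φ p.2), h⟩ : Pairs V)
    else (⟨(φ p.2, φ p.1), by
      have hp' : R p.1 p.2 := (Finset.mem_filter.mp hp).2
      exact lt_of_le_of_ne (le_of_not_gt h) (fun hh => hkey p hp' hh.symm)⟩ : Pairs V))
  · intro p hp
    have hp' : R p.1 p.2 := (Finset.mem_filter.mp hp).2
    by_cases h : rk (φ p.1) < rk (φ p.2)
    · rw [dif_pos h]
      exact mem_filter_any.mpr ⟨Finset.mem_univ _, Or.inl ⟨p.1, p.2, hp', rfl, rfl⟩⟩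
    · rw [dif_neg h]
      exact mem_filter_any.mpr ⟨Finset.mem_univ _, Or.inr ⟨p.1, p.2, hp', rfl, rfl⟩⟩
  · intro p hp q hq h
    have hp' : R p.1 p.2 := (Finset.mem_filter.mp hp).2
    have hq' : R q.1 q.2 := (Finset.mem_filter.mp hq).2
    by_cases h1 : rk (φ p.1) < rk (φ p.2) <;> by_cases h2 : rk (φ q.1) < rk (φ q.2)
    · rw [dif_pos h1, dif_pos h2] at h
      have h' := congrArg Subtype.val h
      have e1 : φ p.1 = φ q.1 := congrArg Prod.fst h'
      have e2 : φ p.2 = φ q.2 := congrArg Prod.snd h'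
      exact Prod.ext (φ.injective e1) (φ.injective e2)
    · rw [dif_pos h1, dif_neg h2] at h
      have h' := congrArg Subtype.val h
      have e1 : φ p.1 = φ q.2 := congrArg Prod.fst h'
      have e2 : φ p.2 = φ q.1 := congrArg Prod.snd h'
      have : p.1 = q.2 := φ.injective e1
      have : p.2 = q.1 := φ.injective e2
      exfalso
      exact (hR _ _ hp').2 (by rwa [← ‹p.1 = q.2›, ← ‹p.2 = q.1›] at hq')
    · rw [dif_neg h1, dif_pos h2] at h
      have h' := congrArg Subtype.val h
      have e1 : φ p.2 = φ q.1 := congrArg Prod.fst h'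
      have e2 : φ p.1 = φ q.2 := congrArg Prod.snd h'
      have : p.2 = q.1 := φ.injective e1
      have : p.1 = q.2 := φ.injective e2
      exfalso
      exact (hR _ _ hp').2 (by rwa [← ‹p.1 = q.2›, ← ‹p.2 = q.1›] at hq')
    · rw [dif_neg h1, dif_neg h2] at h
      have h' := congrArg Subtype.val h
      have e1 : φ p.2 = φ q.2 := congrArg Prod.fst h'
      have e2 : φ p.1 = φ q.1 := congrArg Prod.snd h'
      exact Prod.ext (φ.injective e2) (φ.injective e1)
  · intro e he
    rcases (mem_filter_any.mp he).2 with ⟨w, w', hRw, hw, hw'⟩ | ⟨w, w', hRw, hw, hw'⟩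
    · refine ⟨(w, w'), Finset.mem_filter.mpr ⟨Finset.mem_univ _, hRw⟩, ?_⟩
      have hlt : rk (φ w) < rk (φ w') := by rw [hw, hw']; exact e.prop
      rw [dif_pos hlt]
      apply Subtype.ext
      show (φ w, φ w') = e.val
      rw [hw, hw']
    · refine ⟨(w, w'), Finset.mem_filter.mpr ⟨Finset.mem_univ _, hRw⟩, ?_⟩
      have hlt : ¬ rk (φ w) < rk (φ w') := by
        rw [hw, hw']
        exact lt_asymm e.prop
      rw [dif_neg hlt]
      apply Subtype.ext
      show (φ w', φ w) = e.val
      rw [hw, hw']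

lemma frcard_add {R : V → V → Prop} (hR : IsOrgraph R) (φ : V ↪ Option V) :
    mcard R + frcard R φ = Fintype.card (Pairs V) := by
  rw [← forced_card hR φ]
  unfold frcard
  rw [← Finset.card_univ]
  exact Finset.card_filter_add_card_filter_not _

lemma case2_prod {R : V → V → Prop} (hR : IsOrgraph R) {φ : V ↪ Option V} {u : V}
    (hu : φ u = none) :
    ∏ e : Pairs V, Gfac R φ e =
      (1 + X) ^ outDeg R u * (1 - X) ^ inDeg R u * 2 ^ frcard R φ := by
  have h1 : ∏ e : Pairs V, Gfac R φ e = ∏ e : Pairs V,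
      (if e.val.1 = none ∧ fwdP R φ e then 1 + X else
        if e.val.1 = none ∧ bwdP R φ e then 1 - X else
          if fwdP R φ e ∨ bwdP R φ e then 1 else 2) :=
    Finset.prod_congr rfl (fun e _ => Gfac_cases hR φ e)
  rw [h1, Finset.prod_ite _ _, Finset.prod_const, card_fwd_none hR hu]
  rw [Finset.prod_ite _ _, Finset.prod_const, Finset.filter_filter]
  have hc2 : (univ.filter (fun e : Pairs V =>
      ¬(e.val.1 = none ∧ fwdP R φ e) ∧ e.val.1 = none ∧ bwdP R φ e)).card = inDeg R u := by
    rw [← card_bwd_none hR hu]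
    apply congrArg
    apply Finset.filter_congr
    intro e _
    constructor
    · rintro ⟨-, h⟩; exact h
    · intro h
      exact ⟨fun hh => not_fwd_bwd hR φ e ⟨hh.2, h.2⟩, h⟩
  rw [hc2, Finset.filter_filter]
  have h3 : ∀ e ∈ univ.filter (fun e : Pairs V =>
      ¬(e.val.1 = none ∧ fwdP R φ e) ∧ ¬(e.val.1 = none ∧ bwdP R φ e)),
      (if fwdP R φ e ∨ bwdP R φ e then (1 : Polynomial ℤ) else 2) =
        if ¬(fwdP R φ e ∨ bwdP R φ e) then 2 else 1 := by
    intro e _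
    by_cases h : fwdP R φ e ∨ bwdP R φ e <;> simp [h]
  rw [Finset.prod_congr rfl h3, Finset.prod_ite _ _, Finset.prod_const, Finset.prod_const,
    one_pow, mul_one, Finset.filter_filter]
  have hc3 : (univ.filter (fun e : Pairs V =>
      (¬(e.val.1 = none ∧ fwdP R φ e) ∧ ¬(e.val.1 = none ∧ bwdP R φ e)) ∧
        ¬(fwdP R φ e ∨ bwdP R φ e))).card = frcard R φ := by
    unfold frcard
    apply congrArg
    apply Finset.filter_congr
    intro e _
    constructor
    · rintro ⟨-, h⟩; exact h
    · intro h
      exact ⟨⟨fun hh => h (Or.inl hh.2), fun hh => h (Or.inr hh.2)⟩, h⟩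
  rw [hc3]
  ring

noncomputable def cls (φ : V ↪ Option V) : Option V :=
  if h : ∃ w, φ w = none then some h.choose else none

lemma cls_eq_some {φ : V ↪ Option V} {u : V} : cls φ = some u ↔ φ u = none := by
  unfold cls
  by_cases h : ∃ w, φ w = none
  · rw [dif_pos h]
    constructor
    · intro hh
      obtain rfl : h.choose = u := Option.some_injective _ hh
      exact h.choose_spec
    · intro hu
      have : h.choose = u := φ.injective (h.choose_spec.trans hu.symm)
      rw [this]
  · rw [dif_neg h]
    constructor
    · intro hh; exact absurd hh (by simp)
    · intro hu; exact absurd ⟨u, hu⟩ h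

lemma cls_none {φ : V ↪ Option V} (h : cls φ = none) : ∀ w, φ w ≠ none := by
  intro w hw
  unfold cls at h
  rw [dif_pos ⟨w, hw⟩] at h
  exact absurd h (by simp)

lemma fiber_card_eq (u u' : V) :
    (univ.filter (fun φ : V ↪ Option V => cls φ = some u)).card =
      (univ.filter (fun φ : V ↪ Option V => cls φ = some u')).card := by
  apply Finset.card_bij (fun φ _ => (Equiv.swap u' u).toEmbedding.trans φ)
  · intro φ hφ
    have hu : φ u = none := cls_eq_some.mp (Finset.mem_filter.mp hφ).2
    apply Finset.mem_filter.mpr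
    refine ⟨Finset.mem_univ _, cls_eq_some.mpr ?_⟩
    show φ (Equiv.swap u' u u') = none
    rw [Equiv.swap_apply_left]
    exact hu
  · intro φ hφ ψ hψ h
    apply Function.Embedding.ext
    intro w
    have := congrArg (fun (f : V ↪ Option V) => f ((Equiv.swap u' u) w)) h
    simpa using this
  · intro ψ hψ
    have hu : ψ u' = none := cls_eq_some.mp (Finset.mem_filter.mp hψ).2
    refine ⟨(Equiv.swap u' u).toEmbedding.trans ψ, ?_, ?_⟩
    · apply Finset.mem_filter.mpr
      refine ⟨Finset.mem_univ _, cls_eq_some.mpr ?_⟩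
      show ψ (Equiv.swap u' u u) = none
      rw [Equiv.swap_apply_right]
      exact hu
    · apply Function.Embedding.ext
      intro w
      show ψ (Equiv.swap u' u (Equiv.swap u' u w)) = ψ w
      rw [Equiv.swap_apply_self]

lemma fiber_nonempty (u : V) :
    (univ.filter (fun φ : V ↪ Option V => cls φ = some u)).Nonempty := by
  refine ⟨⟨fun w => if w = u then none else some w, ?_⟩, ?_⟩
  · intro a b h
    dsimp only at h
    by_cases ha : a = u
    · by_cases hb : b = u
      · rw [ha, hb]
      · rw [if_pos ha, if_neg hb] at h; exact absurd h (by simp)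
    · by_cases hb : b = u
      · rw [if_neg ha, if_pos hb] at h; exact absurd h (by simp)
      · rw [if_neg ha, if_neg hb] at h; exact Option.some_injective _ h
  · apply Finset.mem_filter.mpr
    refine ⟨Finset.mem_univ _, cls_eq_some.mpr ?_⟩
    show (if u = u then none else some u) = none
    rw [if_pos rfl]

end CIP

theorem stmt_0' {V : Type} [Fintype V] (A : V → V → Prop)
    (hA : IsOrgraph A) (hCI : ConverseInvariant A) :
    degPoly A = degPoly (fun a b => A b a) := by
  classical
  rcases isEmpty_or_nonempty V with hV | hV
  · unfold degPoly
    rw [Finset.univ_eq_empty, Finset.sum_empty, Finset.sum_empty]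
  · have hA' : IsOrgraph (fun a b => A b a) := by
      intro u v h
      exact ⟨(hA v u h).1.symm, (hA v u h).2⟩
    have hS : CIP.Sval A = CIP.Sval (fun a b => A b a) := by
      unfold CIP.Sval
      apply Finset.sum_congr rfl
      intro g _
      have h3 := hCI (Option V) inferInstance (CIP.tourn g) (CIP.tourn_isTournament g)
      have hcard : Nat.card (CIP.EmbT A (CIP.tourn g)) =
          Nat.card (CIP.EmbT (fun a b => A b a) (CIP.tourn g)) := by
        rw [CIP.card_emb, CIP.card_emb, h3, CIP.card_aut_conv A]
      rw [hcard]
    have key : ∑ φ : V ↪ Option V, ∏ e : CIP.Pairs V, CIP.Gfac A φ e =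
        ∑ φ : V ↪ Option V, ∏ e : CIP.Pairs V, CIP.Gfac (fun a b => A b a) φ e := by
      rw [← CIP.Sval_eq hA, ← CIP.Sval_eq hA', hS]
    set f : (V ↪ Option V) → Polynomial ℤ := fun φ =>
      (2 : Polynomial ℤ) ^ CIP.mcard A *
        ((∏ e : CIP.Pairs V, CIP.Gfac A φ e) -
          ∏ e : CIP.Pairs V, CIP.Gfac (fun a b => A b a) φ e) with hf
    have key0 : ∑ φ : V ↪ Option V, f φ = 0 := by
      simp only [hf]
      rw [← Finset.mul_sum, Finset.sum_sub_distrib, key, sub_self, mul_zero]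
    have fib := Finset.sum_fiberwise (univ : Finset (V ↪ Option V)) CIP.cls f
    rw [key0, Fintype.sum_option] at fib
    have hnone : ∑ φ ∈ univ.filter (fun φ : V ↪ Option V => CIP.cls φ = none), f φ = 0 := by
      apply Finset.sum_eq_zero
      intro φ hφ
      have hne := CIP.cls_none (Finset.mem_filter.mp hφ).2
      have hpr : ∏ e : CIP.Pairs V, CIP.Gfac (fun a b => A b a) φ e
          = ∏ e : CIP.Pairs V, CIP.Gfac A φ e :=
        Finset.prod_congr rfl (fun e _ => CIP.case1_pointwise hA hA' φ hne e)
      simp only [hf]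
      rw [hpr, sub_self, mul_zero]
    set L := (univ.filter (fun φ : V ↪ Option V => CIP.cls φ = some hV.some)).card with hL
    have hsome : ∀ u : V,
        ∑ φ ∈ univ.filter (fun φ : V ↪ Option V => CIP.cls φ = some u), f φ =
          L • ((2 : Polynomial ℤ) ^ (Fintype.card (CIP.Pairs V)) *
            ((1 + X) ^ outDeg A u * (1 - X) ^ inDeg A u -
              (1 + X) ^ outDeg (fun a b => A b a) u *
                (1 - X) ^ inDeg (fun a b => A b a) u)) := by
      intro u
      have hterm : ∀ φ ∈ univ.filter (fun φ : V ↪ Option V => CIP.cls φ = some u),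
          f φ = (2 : Polynomial ℤ) ^ (Fintype.card (CIP.Pairs V)) *
            ((1 + X) ^ outDeg A u * (1 - X) ^ inDeg A u -
              (1 + X) ^ outDeg (fun a b => A b a) u *
                (1 - X) ^ inDeg (fun a b => A b a) u) := by
        intro φ hφ
        have hu : φ u = none := CIP.cls_eq_some.mp (Finset.mem_filter.mp hφ).2
        simp only [hf]
        rw [CIP.case2_prod hA hu, CIP.case2_prod hA' hu, CIP.frcard_conv A φ,
          ← CIP.frcard_add hA φ, pow_add]
        ring
      rw [Finset.sum_congr rfl hterm, Finset.sum_const]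
      congr 1
      rw [hL]
      exact CIP.fiber_card_eq u hV.some
    rw [hnone, zero_add] at fib
    have fib2 : ∑ u : V,
        L • ((2 : Polynomial ℤ) ^ (Fintype.card (CIP.Pairs V)) *
          ((1 + X) ^ outDeg A u * (1 - X) ^ inDeg A u -
            (1 + X) ^ outDeg (fun a b => A b a) u *
              (1 - X) ^ inDeg (fun a b => A b a) u)) = 0 := by
      rw [← fib]
      exact Finset.sum_congr rfl (fun u _ => (hsome u).symm)
    simp only [nsmul_eq_mul] at fib2
    have fib3 : (L : Polynomial ℤ) * (2 : Polynomial ℤ) ^ (Fintype.card (CIP.Pairs V)) *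
        (degPoly A - degPoly (fun a b => A b a)) = 0 := by
      rw [← fib2]
      unfold degPoly
      rw [← Finset.sum_sub_distrib, Finset.mul_sum]
      apply Finset.sum_congr rfl
      intro u _
      ring
    have hLne : (L : Polynomial ℤ) ≠ 0 := by
      have h1 : L ≠ 0 :=
        Nat.pos_iff_ne_zero.mp (Finset.card_pos.mpr (CIP.fiber_nonempty hV.some))
      exact_mod_cast Nat.cast_ne_zero.mpr h1
    have h2ne : ((2 : Polynomial ℤ)) ^ (Fintype.card (CIP.Pairs V)) ≠ 0 :=
      pow_ne_zero _ two_ne_zero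
    have hdiff : degPoly A - degPoly (fun a b => A b a) = 0 := by
      rcases mul_eq_zero.mp fib3 with h | h
      · rcases mul_eq_zero.mp h with h' | h'
        · exact absurd h' hLne
        · exact absurd h' h2ne
      · exact h
    exact sub_eq_zero.mp hdiff

/-- If an oriented graph is converse invariant then `P_D = P_{-D}`. -/
theorem stmt_0 {V : Type} [Fintype V] (A : V → V → Prop)
    (hA : IsOrgraph A) (hCI : ConverseInvariant A) :
    degPoly A = degPoly (fun a b => A b a) := stmt_0' A hA hCI
end

section
/- Let D be a converse invariant oriented graph, let S₁ be the set of sources of D (vertices with in-degree 0) and S₂ the set of sinks of D (vertices with out-degree 0). Then ∑_{v ∈ S₁} 2^{d⁺(v)} = ∑_{v ∈ S₂} 2^{d⁻(v)}. -/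
open Finset Polynomial

section AuxProof

open Function Set

section Key

variable {V W : Type*} (A : V → V → Prop) (B : W → W → Prop)

def AutG : Type _ := {g : V ≃ V // ∀ a b, A a b ↔ A (g a) (g b)}

def EmbT : Type _ := {f : V → W // Function.Injective f ∧ ∀ a b, A a b → B (f a) (f b)}

def CopyT : Type _ := {p : Set W × (W → W → Prop) //
    (∀ a b, p.2 a b → B a b ∧ a ∈ p.1 ∧ b ∈ p.1) ∧
    ∃ e : V ≃ p.1, ∀ a b, A a b ↔ p.2 (e a : W) (e b : W)}

lemma copyCount_eq : copyCount A B = Nat.card (CopyT A B) := rfl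

variable {A B}

noncomputable def ec (c : CopyT A B) : V ≃ c.1.1 := c.2.2.choose

lemma ec_spec (c : CopyT A B) : ∀ a b, A a b ↔ c.1.2 (ec c a : W) (ec c b : W) :=
  c.2.2.choose_spec

noncomputable def Psi (cg : CopyT A B × AutG A) : EmbT A B := by
  refine ⟨fun a => (ec cg.1 (cg.2.1 a) : W), ?_, ?_⟩
  · intro a b h
    exact cg.2.1.injective ((ec cg.1).injective (Subtype.val_injective h))
  · intro a b hab
    exact (cg.1.2.1 _ _ ((ec_spec cg.1 _ _).mp ((cg.2.2 a b).mp hab))).1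

lemma range_Psi (cg : CopyT A B × AutG A) : Set.range (Psi cg).1 = cg.1.1.1 := by
  ext x
  constructor
  · rintro ⟨a, rfl⟩
    exact (ec cg.1 (cg.2.1 a)).2
  · intro hx
    exact ⟨cg.2.1.symm ((ec cg.1).symm ⟨x, hx⟩), by simp [Psi]⟩

lemma rel_Psi (cg : CopyT A B × AutG A) (x y : W) :
    cg.1.1.2 x y ↔ ∃ a b, A a b ∧ x = (Psi cg).1 a ∧ y = (Psi cg).1 b := by
  constructor
  · intro h
    have hx : x ∈ cg.1.1.1 := (cg.1.2.1 _ _ h).2.1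
    have hy : y ∈ cg.1.1.1 := (cg.1.2.1 _ _ h).2.2
    refine ⟨cg.2.1.symm ((ec cg.1).symm ⟨x, hx⟩), cg.2.1.symm ((ec cg.1).symm ⟨y, hy⟩),
      ?_, by simp [Psi], by simp [Psi]⟩
    rw [cg.2.2, ec_spec cg.1]
    simpa [Psi] using h
  · rintro ⟨a, b, hab, rfl, rfl⟩
    exact (ec_spec cg.1 _ _).mp ((cg.2.2 a b).mp hab)

lemma Psi_bijective : Function.Bijective (Psi (A := A) (B := B)) := by
  constructor
  · rintro ⟨c, g⟩ ⟨c', g'⟩ h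
    have hf : (Psi (⟨c, g⟩ : CopyT A B × AutG A)).1 = (Psi (⟨c', g'⟩ : CopyT A B × AutG A)).1 :=
      congrArg Subtype.val h
    have hcc : c = c' := by
      apply Subtype.ext
      apply Prod.ext
      · rw [← range_Psi (⟨c, g⟩ : CopyT A B × AutG A),
          ← range_Psi (⟨c', g'⟩ : CopyT A B × AutG A), hf]
      · funext x y
        apply propext
        rw [rel_Psi (⟨c, g⟩ : CopyT A B × AutG A), rel_Psi (⟨c', g'⟩ : CopyT A B × AutG A), hf]
    subst hcc
    have hg : g = g' := by
      apply Subtype.ext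
      apply Equiv.ext
      intro a
      have := congrFun hf a
      simp only [Psi] at this
      exact (ec c).injective (Subtype.val_injective this)
    rw [hg]
  · rintro ⟨f, hinj, hpres⟩
    classical
    set Rf : W → W → Prop := fun x y => ∃ a b, A a b ∧ x = f a ∧ y = f b with hRf
    have hcond1 : ∀ a b, Rf a b → B a b ∧ a ∈ Set.range f ∧ b ∈ Set.range f := by
      rintro x y ⟨a, b, hab, rfl, rfl⟩
      exact ⟨hpres a b hab, ⟨a, rfl⟩, ⟨b, rfl⟩⟩
    have hspec : ∀ a b, A a b ↔ Rf ((Equiv.ofInjective f hinj a : W)) ((Equiv.ofInjective f hinj b : W)) := by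
      intro a b
      constructor
      · intro hab; exact ⟨a, b, hab, rfl, rfl⟩
      · rintro ⟨a', b', hab, ha, hb⟩
        have ha' : f a = f a' := ha
        have hb' : f b = f b' := hb
        rw [hinj ha', hinj hb']; exact hab
    set c : CopyT A B := ⟨(Set.range f, Rf), hcond1, ⟨Equiv.ofInjective f hinj, hspec⟩⟩ with hc
    set g : V ≃ V := (Equiv.ofInjective f hinj).trans (ec c).symm with hgdef
    have hec : ∀ a, (ec c (g a) : W) = f a := by
      intro a
      simp [hgdef]
    have hgaut : ∀ a b, A a b ↔ A (g a) (g b) := by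
      intro a b
      have h1 : A (g a) (g b) ↔ Rf (f a) (f b) := by
        have h2 := ec_spec c (g a) (g b)
        rwa [hec a, hec b] at h2
      exact (hspec a b).trans h1.symm
    refine ⟨⟨c, ⟨g, hgaut⟩⟩, ?_⟩
    apply Subtype.ext
    funext a
    exact hec a

end Key

theorem card_EmbT {V W : Type*} [Finite V] [Finite W] (A : V → V → Prop) (B : W → W → Prop) :
    Nat.card (EmbT A B) = copyCount A B * Nat.card (AutG A) := by
  rw [copyCount_eq, ← Nat.card_prod]
  exact (Nat.card_congr (Equiv.ofBijective _ (Psi_bijective (A := A) (B := B)))).symm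

section Ext
variable {V : Type*}

def extB (r : V → V → Prop) : Option V → Option V → Prop
  | _, none => False
  | none, some _ => True
  | some u, some v => r u v

lemma extB_some_some (r : V → V → Prop) (u v : V) : extB r (some u) (some v) ↔ r u v := Iff.rfl

lemma extB_none_some (r : V → V → Prop) (v : V) : extB r none (some v) := trivial

lemma extB_not_none (r : V → V → Prop) (x : Option V) : ¬ extB r x none := by
  cases x <;> exact fun h => h

lemma extB_tournament {r : V → V → Prop} (hr : IsTournament r) : IsTournament (extB r) := by
  constructor
  · rintro (_ | v) h
    · exact h
    · exact hr.1 v h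
  · rintro (_ | u) (_ | v) huv
    · exact absurd rfl huv
    · simpa [extB] using fun h => h
    · constructor
      · intro h; exact absurd h (extB_not_none r _)
      · intro h; exact absurd (extB_none_some r u) h
    · exact hr.2 u v (fun h => huv (by rw [h]))

end Ext

section Param
variable {V : Type} [Fintype V]

def PT (V : Type) [Fintype V] : Type :=
  {p : V × V // (Fintype.equivFin V p.1 : ℕ) < (Fintype.equivFin V p.2 : ℕ)}

noncomputable instance : Fintype (PT V) := by
  classical
  unfold PT
  infer_instance

def relg (g : PT V → Bool) (u v : V) : Prop :=
  (∃ h : (Fintype.equivFin V u : ℕ) < (Fintype.equivFin V v : ℕ), g ⟨(u, v), h⟩ = true) ∨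
  (∃ h : (Fintype.equivFin V v : ℕ) < (Fintype.equivFin V u : ℕ), g ⟨(v, u), h⟩ = false)

lemma eF_trichotomy {u v : V} (h : u ≠ v) :
    (Fintype.equivFin V u : ℕ) < (Fintype.equivFin V v : ℕ) ∨
    (Fintype.equivFin V v : ℕ) < (Fintype.equivFin V u : ℕ) := by
  rcases Nat.lt_trichotomy (Fintype.equivFin V u : ℕ) (Fintype.equivFin V v : ℕ) with h1 | h1 | h1
  · exact Or.inl h1
  · exact absurd ((Fintype.equivFin V).injective (Fin.val_injective h1)) h
  · exact Or.inr h1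

lemma relg_iff_true {u v : V} (g : PT V → Bool)
    (h : (Fintype.equivFin V u : ℕ) < (Fintype.equivFin V v : ℕ)) :
    relg g u v ↔ g ⟨(u, v), h⟩ = true := by
  constructor
  · rintro (⟨h1, hg⟩ | ⟨h1, hg⟩)
    · exact hg
    · exact absurd h1 (Nat.lt_asymm h)
  · intro hg
    exact Or.inl ⟨h, hg⟩

lemma relg_iff_false {u v : V} (g : PT V → Bool)
    (h : (Fintype.equivFin V u : ℕ) < (Fintype.equivFin V v : ℕ)) :
    relg g v u ↔ g ⟨(u, v), h⟩ = false := by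
  constructor
  · rintro (⟨h1, hg⟩ | ⟨h1, hg⟩)
    · exact absurd h1 (Nat.lt_asymm h)
    · exact hg
  · intro hg
    exact Or.inr ⟨h, hg⟩

lemma relg_tournament (g : PT V → Bool) : IsTournament (relg g) := by
  constructor
  · rintro v (⟨h1, _⟩ | ⟨h1, _⟩) <;> exact Nat.lt_irrefl _ h1
  · intro u v huv
    rcases eF_trichotomy huv with h | h
    · rw [relg_iff_true g h, relg_iff_false g h]
      cases g ⟨(u, v), h⟩ <;> simp
    · rw [relg_iff_false g h, relg_iff_true g h]
      cases g ⟨(v, u), h⟩ <;> simp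

end Param

section Split

def EmbN' {V : Type*} (A : V → V → Prop) (r : V → V → Prop) : Type _ :=
  {f : V → Option V // Function.Injective f ∧ (∀ a b, A a b → extB r (f a) (f b)) ∧
    none ∈ Set.range f}

instance {V W : Type*} [Fintype V] [Finite W] (A : V → V → Prop) (B : W → W → Prop) :
    Finite (EmbT A B) := by unfold EmbT; infer_instance

instance {V : Type*} [Fintype V] (A r : V → V → Prop) : Finite (EmbN' A r) := by
  unfold EmbN'; infer_instance

lemma card_split {V : Type*} [Fintype V] (A r : V → V → Prop) :
    Nat.card (EmbT A (extB r)) = Nat.card (EmbN' A r) + Nat.card (EmbT A r) := by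
  classical
  have e1 : {f : EmbT A (extB r) // none ∈ Set.range f.1} ⊕
      {f : EmbT A (extB r) // none ∉ Set.range f.1} ≃ EmbT A (extB r) :=
    Equiv.sumCompl _
  rw [← Nat.card_congr e1, Nat.card_sum]
  congr 1
  · apply Nat.card_congr
    exact { toFun := fun f => ⟨f.1.1, f.1.2.1, f.1.2.2, f.2⟩
            invFun := fun f => ⟨⟨f.1, f.2.1, f.2.2.1⟩, f.2.2.2⟩
            left_inv := fun f => rfl
            right_inv := fun f => rfl }
  · apply Nat.card_congr
    have hsome : ∀ (f : {f : EmbT A (extB r) // none ∉ Set.range f.1}) (a : V),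
        (f.1.1 a).isSome := by
      intro f a
      rcases hx : f.1.1 a with _ | x
      · exact absurd ⟨a, hx⟩ f.2
      · rfl
    refine { toFun := fun f => ⟨fun a => (f.1.1 a).get (hsome f a), ?_, ?_⟩
             invFun := fun f => ⟨⟨fun a => some (f.1 a), ?_, ?_⟩, ?_⟩
             left_inv := ?_
             right_inv := ?_ }
    · intro a b h
      have h2 := congrArg some h
      rw [Option.some_get, Option.some_get] at h2
      exact f.1.2.1 h2
    · intro a b hab
      have h := f.1.2.2 a b hab
      rw [← Option.some_get (hsome f a), ← Option.some_get (hsome f b)] at h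
      exact h
    · intro a b h
      exact f.2.1 (Option.some_injective _ h)
    · intro a b hab
      exact f.2.2 a b hab
    · rintro ⟨x, hx⟩
      exact Option.some_ne_none _ hx
    · intro f
      apply Subtype.ext
      apply Subtype.ext
      funext a
      simp
    · intro f
      apply Subtype.ext
      funext a
      simp

end Split



section Counting
variable {V : Type} [Fintype V]

def presOn (A : V → V → Prop) (g : PT V → Bool) (f : V → Option V) : Prop :=
  ∀ a b, A a b → extB (relg g) (f a) (f b)


noncomputable def arcCount {V : Type*} (A : V → V → Prop) : ℕ :=
  Nat.card {p : V × V // A p.1 p.2}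

def ArcT {V : Type*} (A : V → V → Prop) : Type _ := {p : V × V // A p.1 p.2}

def ArcT' {V : Type*} (A : V → V → Prop) (v₀ : V) : Type _ := {ar : ArcT A // ar.1.1 ≠ v₀}

instance (A : V → V → Prop) : Finite (ArcT A) := by unfold ArcT; infer_instance
instance (A : V → V → Prop) (v₀ : V) : Finite (ArcT' A v₀) := by
  unfold ArcT'; infer_instance
noncomputable instance (A : V → V → Prop) (v₀ : V) : Fintype (ArcT' A v₀) :=
  Fintype.ofFinite _

def fbang (f : V → Option V) (v₀ : V) : V → V := fun a => (f a).getD v₀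

variable {A : V → V → Prop} {v₀ : V} {f : V → Option V}

lemma fbang_some (hinj : Injective f) (hf : f v₀ = none) {a : V} (ha : a ≠ v₀) :
    f a = some (fbang f v₀ a) := by
  rcases h : f a with _ | x
  · exact absurd (hinj (h.trans hf.symm)) ha
  · simp [fbang, h]

lemma fbang_inj (hinj : Injective f) (hf : f v₀ = none) {a b : V} (ha : a ≠ v₀) (hb : b ≠ v₀)
    (h : fbang f v₀ a = fbang f v₀ b) : a = b := by
  apply hinj
  rw [fbang_some hinj hf ha, fbang_some hinj hf hb, h]

lemma arcT'_snd_ne (hsrc : ∀ b, ¬ A b v₀) (ar : ArcT' A v₀) : ar.1.1.2 ≠ v₀ :=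
  fun h => hsrc _ (h ▸ ar.1.2)

lemma fbang_ne (hA : IsOrgraph A) (hsrc : ∀ b, ¬ A b v₀) (hinj : Injective f)
    (hf : f v₀ = none) (ar : ArcT' A v₀) :
    fbang f v₀ ar.1.1.1 ≠ fbang f v₀ ar.1.1.2 := by
  intro h
  exact (hA _ _ ar.1.2).1 (fbang_inj hinj hf ar.2 (arcT'_snd_ne hsrc ar) h)

noncomputable def phi (hA : IsOrgraph A) (hsrc : ∀ b, ¬ A b v₀) (hinj : Injective f)
    (hf : f v₀ = none) (ar : ArcT' A v₀) : PT V × Bool :=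
  if h : (Fintype.equivFin V (fbang f v₀ ar.1.1.1) : ℕ) <
      (Fintype.equivFin V (fbang f v₀ ar.1.1.2) : ℕ)
  then (⟨(fbang f v₀ ar.1.1.1, fbang f v₀ ar.1.1.2), h⟩, true)
  else (⟨(fbang f v₀ ar.1.1.2, fbang f v₀ ar.1.1.1),
        (eF_trichotomy (fbang_ne hA hsrc hinj hf ar)).resolve_left h⟩, false)

lemma phi1_inj (hA : IsOrgraph A) (hsrc : ∀ b, ¬ A b v₀) (hinj : Injective f)
    (hf : f v₀ = none) :
    Injective (fun ar => (phi hA hsrc hinj hf ar).1) := by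
  intro ar ar' h
  simp only [phi] at h
  have hb := arcT'_snd_ne hsrc ar
  have hb' := arcT'_snd_ne hsrc ar'
  have ext_eq : ar.1.1 = ar'.1.1 → ar = ar' := by
    intro hh
    exact Subtype.ext (Subtype.ext hh)
  split_ifs at h with h1 h2 h2
  · have hx : fbang f v₀ ar.1.1.1 = fbang f v₀ ar'.1.1.1 := congrArg (fun p : PT V => p.1.1) h
    have hy : fbang f v₀ ar.1.1.2 = fbang f v₀ ar'.1.1.2 := congrArg (fun p : PT V => p.1.2) h
    exact ext_eq (Prod.ext (fbang_inj hinj hf ar.2 ar'.2 hx) (fbang_inj hinj hf hb hb' hy))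
  · have hx : fbang f v₀ ar.1.1.1 = fbang f v₀ ar'.1.1.2 := congrArg (fun p : PT V => p.1.1) h
    have hy : fbang f v₀ ar.1.1.2 = fbang f v₀ ar'.1.1.1 := congrArg (fun p : PT V => p.1.2) h
    have ha1 : ar.1.1.1 = ar'.1.1.2 := fbang_inj hinj hf ar.2 hb' hx
    have ha2 : ar.1.1.2 = ar'.1.1.1 := fbang_inj hinj hf hb ar'.2 hy
    exact absurd (ha1 ▸ ha2 ▸ ar.1.2) (hA _ _ ar'.1.2).2
  · have hx : fbang f v₀ ar.1.1.2 = fbang f v₀ ar'.1.1.1 := congrArg (fun p : PT V => p.1.1) h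
    have hy : fbang f v₀ ar.1.1.1 = fbang f v₀ ar'.1.1.2 := congrArg (fun p : PT V => p.1.2) h
    have ha1 : ar.1.1.2 = ar'.1.1.1 := fbang_inj hinj hf hb ar'.2 hx
    have ha2 : ar.1.1.1 = ar'.1.1.2 := fbang_inj hinj hf ar.2 hb' hy
    exact absurd (ha2 ▸ ha1 ▸ ar.1.2) (hA _ _ ar'.1.2).2
  · have hx : fbang f v₀ ar.1.1.2 = fbang f v₀ ar'.1.1.2 := congrArg (fun p : PT V => p.1.1) h
    have hy : fbang f v₀ ar.1.1.1 = fbang f v₀ ar'.1.1.1 := congrArg (fun p : PT V => p.1.2) h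
    exact ext_eq (Prod.ext (fbang_inj hinj hf ar.2 ar'.2 hy) (fbang_inj hinj hf hb hb' hx))

lemma pres_char (hA : IsOrgraph A) (hsrc : ∀ b, ¬ A b v₀) (hinj : Injective f)
    (hf : f v₀ = none) (g : PT V → Bool) :
    presOn A g f ↔ ∀ ar : ArcT' A v₀,
      g (phi hA hsrc hinj hf ar).1 = (phi hA hsrc hinj hf ar).2 := by
  constructor
  · intro hpres ar
    have hb := arcT'_snd_ne hsrc ar
    have h := hpres _ _ ar.1.2
    rw [fbang_some hinj hf ar.2, fbang_some hinj hf hb] at h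
    change relg g _ _ at h
    simp only [phi]
    split_ifs with hlt
    · exact (relg_iff_true g hlt).mp h
    · rcases h with ⟨h1, hg⟩ | ⟨h1, hg⟩
      · exact absurd h1 hlt
      · exact hg
  · intro hcon a b hab
    by_cases ha : a = v₀
    · subst ha
      have hb : b ≠ a := fun h => (hA _ _ hab).1 h.symm
      rw [hf, fbang_some hinj hf hb]
      trivial
    · have hb : b ≠ v₀ := fun h => hsrc a (h ▸ hab)
      rw [fbang_some hinj hf ha, fbang_some hinj hf hb]
      change relg g _ _
      have h := hcon ⟨⟨(a, b), hab⟩, ha⟩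
      simp only [phi] at h
      split_ifs at h with hlt
      · exact Or.inl ⟨hlt, h⟩
      · exact Or.inr ⟨_, h⟩
end Counting

section Count2
variable {V : Type} [Fintype V]
variable {A : V → V → Prop} {v₀ : V} {f : V → Option V}

lemma arc_split (A : V → V → Prop) (v₀ : V) :
    Nat.card (ArcT' A v₀) + outDeg A v₀ = arcCount A := by
  classical
  have e1 : {ar : ArcT A // ¬ ar.1.1 ≠ v₀} ≃ {b // A v₀ b} :=
    { toFun := fun x => match x with
        | ⟨⟨⟨a, b⟩, hab⟩, hx⟩ => ⟨b, by
            have h : a = v₀ := not_not.mp hx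
            subst h
            exact hab⟩
      invFun := fun b => ⟨⟨(v₀, b.1), b.2⟩, by simp⟩
      left_inv := by
        rintro ⟨⟨⟨a, b⟩, hab⟩, h⟩
        have h' : a = v₀ := not_not.mp h
        subst h'
        rfl
      right_inv := fun b => rfl }
  have e2 : ArcT' A v₀ ⊕ {ar : ArcT A // ¬ ar.1.1 ≠ v₀} ≃ ArcT A :=
    Equiv.sumCompl _
  have := Nat.card_congr e2
  rw [Nat.card_sum, Nat.card_congr e1] at this
  exact this

lemma harith_aux : ∀ N m d : ℕ, m ≤ N → N - m + (m + d) = N + d := by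
  intro N m d h
  omega

lemma card_presOn (hA : IsOrgraph A) (hsrc : ∀ b, ¬ A b v₀)
    (hinj : Injective f) (hf : f v₀ = none) :
    Nat.card {g : PT V → Bool // presOn A g f} * 2 ^ arcCount A
      = 2 ^ (Fintype.card (PT V) + outDeg A v₀) := by
  classical
  set s : Finset (PT V) := Finset.univ.image (fun ar => (phi hA hsrc hinj hf ar).1) with hs
  set t : PT V → Bool := fun p =>
    if h : ∃ ar, (phi hA hsrc hinj hf ar).1 = p then (phi hA hsrc hinj hf h.choose).2
    else false with ht
  have hchar : ∀ g : PT V → Bool, presOn A g f ↔ ∀ p ∈ s, g p = t p := by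
    intro g
    rw [pres_char hA hsrc hinj hf]
    constructor
    · intro harcs p hp
      rw [hs, Finset.mem_image] at hp
      obtain ⟨ar, -, har⟩ := hp
      have hex : ∃ ar, (phi hA hsrc hinj hf ar).1 = p := ⟨ar, har⟩
      have hspec : (phi hA hsrc hinj hf hex.choose).1 = p := hex.choose_spec
      rw [ht]
      simp only [dif_pos hex]
      rw [← harcs hex.choose, hspec]
    · intro hcon ar
      have hp : (phi hA hsrc hinj hf ar).1 ∈ s := by
        rw [hs, Finset.mem_image]
        exact ⟨ar, Finset.mem_univ _, rfl⟩
      have h := hcon _ hp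
      rw [ht] at h
      have hex : ∃ ar', (phi hA hsrc hinj hf ar').1 = (phi hA hsrc hinj hf ar).1 :=
        ⟨ar, rfl⟩
      simp only [dif_pos hex] at h
      have hch : hex.choose = ar := phi1_inj hA hsrc hinj hf hex.choose_spec
      rw [hch] at h
      exact h
  have hcard1 : Nat.card {g : PT V → Bool // presOn A g f}
      = Nat.card {g : PT V → Bool // ∀ p ∈ s, g p = t p} :=
    Nat.card_congr (Equiv.subtypeEquivRight hchar)
  have e3 : {g : PT V → Bool // ∀ p ∈ s, g p = t p} ≃ ({p : PT V // p ∈ sᶜ} → Bool) :=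
    { toFun := fun g q => g.1 q.1
      invFun := fun h => ⟨fun p => if hp : p ∈ s then t p else h ⟨p, Finset.mem_compl.mpr hp⟩,
        fun p hp => by simp [hp]⟩
      left_inv := by
        intro g
        apply Subtype.ext
        funext p
        by_cases hp : p ∈ s
        · simp [hp, (g.2 p hp).symm]
        · simp [hp]
      right_inv := by
        intro h
        funext q
        have hq : ¬ q.1 ∈ s := Finset.mem_compl.mp q.2
        simp [hq] }
  have hcard2 : Nat.card ({p : PT V // p ∈ sᶜ} → Bool) = 2 ^ (Fintype.card (PT V) - s.card) := by
    rw [Nat.card_eq_fintype_card, Fintype.card_fun, Fintype.card_bool, Fintype.card_coe,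
      Finset.card_compl]
  have hscard : s.card = Nat.card (ArcT' A v₀) := by
    rw [hs, Finset.card_image_of_injective _ (phi1_inj hA hsrc hinj hf), Finset.card_univ,
      Nat.card_eq_fintype_card]
  have hle : s.card ≤ Fintype.card (PT V) := Finset.card_le_univ s
  clear_value s t
  rw [hcard1, Nat.card_congr e3, hcard2, ← arc_split A v₀, ← hscard, ← pow_add]
  rw [harith_aux _ _ _ hle]
end Count2

section SumAssembly
variable {V : Type} [Fintype V]

noncomputable instance : DecidableEq (PT V) := Classical.decEq _

def InjV (V : Type) [Fintype V] (v₀ : V) : Type :=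
  {f : V → Option V // Function.Injective f ∧ f v₀ = none}

instance (v₀ : V) : Finite (InjV V v₀) := by unfold InjV; infer_instance
noncomputable instance (v₀ : V) : Fintype (InjV V v₀) := Fintype.ofFinite _

def EmbV (A r : V → V → Prop) (v₀ : V) : Type :=
  {f : V → Option V // Function.Injective f ∧ (∀ a b, A a b → extB r (f a) (f b)) ∧
    f v₀ = none}

instance (A r : V → V → Prop) (v₀ : V) : Finite (EmbV A r v₀) := by
  unfold EmbV; infer_instance

lemma my_card_sigma {ι : Type*} [Fintype ι] {β : ι → Type*} [∀ i, Finite (β i)] :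
    Nat.card (Sigma β) = ∑ i, Nat.card (β i) := by
  classical
  letI : ∀ i, Fintype (β i) := fun i => Fintype.ofFinite _
  rw [Nat.card_eq_fintype_card, Fintype.card_sigma]
  exact Finset.sum_congr rfl fun i _ => (Nat.card_eq_fintype_card).symm

lemma embN_card_sigma (A r : V → V → Prop) :
    Nat.card (EmbN' A r) = Nat.card (Σ v₀ : V, EmbV A r v₀) := by
  refine (Nat.card_congr (Equiv.ofBijective
    (fun x : Σ v₀ : V, EmbV A r v₀ =>
      (⟨x.2.1, x.2.2.1, x.2.2.2.1, ⟨x.1, x.2.2.2.2⟩⟩ : EmbN' A r)) ⟨?_, ?_⟩)).symm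
  · rintro ⟨v₀, f⟩ ⟨v₁, f'⟩ h
    have hf : f.1 = f'.1 := congrArg Subtype.val h
    have h0 : f.1 v₀ = none := f.2.2.2
    have h1 : f.1 v₁ = none := by rw [hf]; exact f'.2.2.2
    have hv : v₀ = v₁ := f.2.1 (h0.trans h1.symm)
    subst hv
    exact Sigma.ext rfl (heq_of_eq (Subtype.ext hf))
  · rintro ⟨F, hinj, hpres, hmem⟩
    exact ⟨⟨hmem.choose, ⟨F, hinj, hpres, hmem.choose_spec⟩⟩, Subtype.ext rfl⟩

def sigma_swap_equiv (A : V → V → Prop) (v₀ : V) :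
    (Σ g : PT V → Bool, EmbV A (relg g) v₀) ≃
      Σ f : InjV V v₀, {g : PT V → Bool // presOn A g f.1} where
  toFun x := ⟨⟨x.2.1, x.2.2.1, x.2.2.2.2⟩, ⟨x.1, x.2.2.2.1⟩⟩
  invFun x := ⟨x.2.1, ⟨x.1.1, x.1.2.1, x.2.2, x.1.2.2⟩⟩
  left_inv x := rfl
  right_inv x := rfl

lemma indeg_zero_iff (A : V → V → Prop) (v₀ : V) :
    inDeg A v₀ = 0 ↔ ∀ b, ¬ A b v₀ := by
  rw [inDeg, Nat.card_eq_zero]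
  constructor
  · rintro (h | h)
    · exact fun b hb => h.false ⟨b, hb⟩
    · exact absurd h (by rw [not_infinite_iff_finite]; infer_instance)
  · intro h
    exact Or.inl ⟨fun b => h b.1 b.2⟩

lemma sum_over_g (A : V → V → Prop) (hA : IsOrgraph A) (v₀ : V) :
    (∑ g : PT V → Bool, Nat.card (EmbV A (relg g) v₀)) * 2 ^ arcCount A
      = if inDeg A v₀ = 0 then
          Nat.card (InjV V v₀) * 2 ^ (Fintype.card (PT V) + outDeg A v₀)
        else 0 := by
  classical
  have hstep : (∑ g : PT V → Bool, Nat.card (EmbV A (relg g) v₀))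
      = ∑ f : InjV V v₀, Nat.card {g : PT V → Bool // presOn A g f.1} := by
    rw [← my_card_sigma, ← my_card_sigma]
    exact Nat.card_congr (sigma_swap_equiv A v₀)
  by_cases h0 : inDeg A v₀ = 0
  · have hsrc : ∀ b, ¬ A b v₀ := (indeg_zero_iff A v₀).mp h0
    rw [if_pos h0, hstep, Finset.sum_mul]
    have : ∀ f : InjV V v₀,
        Nat.card {g : PT V → Bool // presOn A g f.1} * 2 ^ arcCount A
          = 2 ^ (Fintype.card (PT V) + outDeg A v₀) :=
      fun f => card_presOn hA hsrc f.2.1 f.2.2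
    rw [Finset.sum_congr rfl fun f _ => this f, Finset.sum_const, Finset.card_univ,
      smul_eq_mul, Nat.card_eq_fintype_card]
  · rw [if_neg h0]
    have hb : ∃ b, A b v₀ := by
      by_contra hc
      push_neg at hc
      exact h0 ((indeg_zero_iff A v₀).mpr hc)
    obtain ⟨b, hbv⟩ := hb
    have hempty : ∀ g : PT V → Bool, Nat.card (EmbV A (relg g) v₀) = 0 := by
      intro g
      rw [Nat.card_eq_zero]
      left
      constructor
      rintro ⟨f, hinj, hpres, hf⟩
      have := hpres b v₀ hbv
      rw [hf] at this
      exact extB_not_none _ _ this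
    rw [Finset.sum_congr rfl fun g _ => hempty g, Finset.sum_const, smul_eq_mul,
      Nat.mul_zero, Nat.zero_mul]

lemma count_total (A : V → V → Prop) (hA : IsOrgraph A) :
    (∑ g : PT V → Bool, Nat.card (EmbN' A (relg g))) * 2 ^ arcCount A
      = ∑ v ∈ Finset.univ.filter (fun v => inDeg A v = 0),
          Nat.card (InjV V v) * 2 ^ (Fintype.card (PT V) + outDeg A v) := by
  classical
  have h1 : ∀ g : PT V → Bool, Nat.card (EmbN' A (relg g))
      = ∑ v : V, Nat.card (EmbV A (relg g) v) := by
    intro g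
    rw [embN_card_sigma A (relg g), my_card_sigma (β := fun v => EmbV A (relg g) v)]
  rw [Finset.sum_congr rfl fun g _ => h1 g, Finset.sum_comm, Finset.sum_mul,
    Finset.sum_congr rfl fun v _ => sum_over_g A hA v, Finset.sum_filter]

end SumAssembly


section Converse
variable {V : Type} [Fintype V]

lemma autG_card_converse (A : V → V → Prop) :
    Nat.card (AutG (fun a b => A b a)) = Nat.card (AutG A) :=
  Nat.card_congr (Equiv.subtypeEquivRight fun g => ⟨fun h a b => h b a, fun h a b => h b a⟩)

lemma arcCount_converse (A : V → V → Prop) :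
    arcCount (fun a b => A b a) = arcCount A :=
  Nat.card_congr
  { toFun := fun p => ⟨(p.1.2, p.1.1), p.2⟩
    invFun := fun p => ⟨(p.1.2, p.1.1), p.2⟩
    left_inv := fun p => rfl
    right_inv := fun p => rfl }

lemma embN_card_converse (A : V → V → Prop) (hCI : ConverseInvariant A) (g : PT V → Bool) :
    Nat.card (EmbN' A (relg g)) = Nat.card (EmbN' (fun a b => A b a) (relg g)) := by
  have t1 : IsTournament (relg g) := relg_tournament g
  have t2 : IsTournament (extB (relg g)) := extB_tournament t1
  have h1 := card_split A (relg g)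
  have h2 := card_split (fun a b => A b a) (relg g)
  rw [card_EmbT A (extB (relg g)), card_EmbT A (relg g)] at h1
  rw [card_EmbT (fun a b => A b a) (extB (relg g)), card_EmbT (fun a b => A b a) (relg g)] at h2
  rw [hCI (Option V) inferInstance (extB (relg g)) t2, hCI V inferInstance (relg g) t1,
    ← autG_card_converse A] at h1
  rw [h1] at h2
  exact Nat.add_right_cancel h2

lemma injV_card_const (u v : V) : Nat.card (InjV V u) = Nat.card (InjV V v) := by
  classical
  apply Nat.card_congr
  refine { toFun := fun f => ⟨f.1 ∘ (Equiv.swap u v), f.2.1.comp (Equiv.swap u v).injective, ?_⟩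
           invFun := fun f => ⟨f.1 ∘ (Equiv.swap u v), f.2.1.comp (Equiv.swap u v).injective, ?_⟩
           left_inv := ?_
           right_inv := ?_ }
  · show f.1 (Equiv.swap u v v) = none
    rw [Equiv.swap_apply_right]
    exact f.2.2
  · show f.1 (Equiv.swap u v u) = none
    rw [Equiv.swap_apply_left]
    exact f.2.2
  · intro f
    apply Subtype.ext
    funext a
    show f.1 (Equiv.swap u v (Equiv.swap u v a)) = f.1 a
    rw [Equiv.swap_apply_self]
  · intro f
    apply Subtype.ext
    funext a
    show f.1 (Equiv.swap u v (Equiv.swap u v a)) = f.1 a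
    rw [Equiv.swap_apply_self]

lemma injV_pos (v : V) : 0 < Nat.card (InjV V v) := by
  classical
  have hne : Nonempty (InjV V v) := by
    refine ⟨⟨fun a => if a = v then none else some a, ?_, if_pos rfl⟩⟩
    intro a b h
    dsimp only at h
    by_cases ha : a = v <;> by_cases hb : b = v
    · rw [ha, hb]
    · rw [if_pos ha, if_neg hb] at h
      exact absurd h.symm (Option.some_ne_none b)
    · rw [if_neg ha, if_pos hb] at h
      exact absurd h (Option.some_ne_none a)
    · rw [if_neg ha, if_neg hb] at h
      exact Option.some_injective _ h
  exact Nat.card_pos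

end Converse

end AuxProof

/-- For a converse invariant orgraph, the source and sink power sums agree. -/
theorem stmt_1 {V : Type} [Fintype V] (A : V → V → Prop)
    (hA : IsOrgraph A) (hCI : ConverseInvariant A) :
    ∑ v ∈ Finset.univ.filter (fun v => inDeg A v = 0), 2 ^ outDeg A v =
      ∑ v ∈ Finset.univ.filter (fun v => outDeg A v = 0), 2 ^ inDeg A v := by
  classical
  rcases isEmpty_or_nonempty V with hV | hV
  · rw [Finset.univ_eq_empty]
    simp
  have hA' : IsOrgraph (fun a b => A b a) := fun u v h => ⟨(hA v u h).1.symm, (hA v u h).2⟩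
  have hsum : (∑ g : PT V → Bool, Nat.card (EmbN' A (relg g)))
      = ∑ g : PT V → Bool, Nat.card (EmbN' (fun a b => A b a) (relg g)) :=
    Finset.sum_congr rfl fun g _ => embN_card_converse A hCI g
  have h1 := count_total A hA
  have h2 := count_total (fun a b => A b a) hA'
  rw [arcCount_converse, ← hsum, h1] at h2
  have hdeg1 : ∀ v : V, inDeg (fun a b => A b a) v = outDeg A v := fun v => rfl
  have hdeg2 : ∀ v : V, outDeg (fun a b => A b a) v = inDeg A v := fun v => rfl
  simp only [hdeg1, hdeg2, pow_add] at h2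
  have hre : ∀ (v : V) (d : ℕ),
      Nat.card (InjV V v) * (2 ^ Fintype.card (PT V) * 2 ^ d)
        = (Nat.card (InjV V hV.some) * 2 ^ Fintype.card (PT V)) * 2 ^ d := by
    intro v d
    rw [injV_card_const v hV.some]
    ring
  rw [Finset.sum_congr rfl (fun v _ => hre v _), Finset.sum_congr rfl (fun v _ => hre v _),
    ← Finset.mul_sum, ← Finset.mul_sum] at h2
  exact Nat.eq_of_mul_eq_mul_left
    (Nat.mul_pos (injV_pos hV.some) (Nat.pow_pos (by norm_num))) h2
end

section
/- Let D be an orientation of a d-regular graph such that P_D(x) = P_{−D}(x) as polynomials. Then the multiset of out-degrees of D equals the multiset of in-degrees of D, and consequently the degree-pair multisets Deg(D) and Deg(−D) coincide. -/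
open Finset Polynomial

lemma aux_sum_X_pow_eq {V : Type} [Fintype V] (f g : V → ℕ)
    (h : ∑ v : V, (X : Polynomial ℚ) ^ f v = ∑ v : V, (X : Polynomial ℚ) ^ g v) :
    (Finset.univ.val.map f) = (Finset.univ.val.map g) := by
  classical
  ext n
  have h2 := congrArg (fun p => Polynomial.coeff p n) h
  simp only [finset_sum_coeff, coeff_X_pow] at h2
  rw [Finset.sum_boole, Finset.sum_boole] at h2
  have h3 : (Finset.univ.filter fun v => n = f v).card
      = (Finset.univ.filter fun v => n = g v).card := by
    exact_mod_cast h2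
  rw [Multiset.count_map, Multiset.count_map]
  simpa [Finset.card, Finset.filter] using h3

/-- For an orientation of a d-regular graph with `P_D = P_{-D}`, the out-degree
multiset equals the in-degree multiset, and the degree-pair multisets coincide. -/
theorem stmt_7 {V : Type} [Fintype V] (d : ℕ)
    (A : V → V → Prop) (hA : IsOrgraph A)
    (hreg : ∀ v : V, outDeg A v + inDeg A v = d)
    (hP : degPoly A = degPoly (fun a b => A b a)) :
    (Finset.univ.val.map fun v : V => outDeg A v) =
      (Finset.univ.val.map fun v : V => inDeg A v) ∧
    (Finset.univ.val.map fun v : V => (outDeg A v, inDeg A v)) =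
      (Finset.univ.val.map fun v : V => (inDeg A v, outDeg A v)) := by
  classical
  have part1 : (Finset.univ.val.map fun v : V => outDeg A v) =
      (Finset.univ.val.map fun v : V => inDeg A v) := by
    set K := RatFunc ℚ
    set t : K := RatFunc.X with htdef
    have ht : (1 : K) + t ≠ 0 := by
      have : (1 : K) + t = algebraMap (Polynomial ℚ) K (1 + X) := by
        rw [htdef, map_add, map_one, RatFunc.algebraMap_X]
      rw [this]
      exact RatFunc.algebraMap_ne_zero
        (by simpa [add_comm] using Polynomial.X_add_C_ne_zero (1 : ℚ))
    set x : K := (1 - t) / (1 + t) with hxdef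
    have h1 : (1 : K) + x = 2 / (1 + t) := by
      rw [hxdef, eq_div_iff ht, add_mul, div_mul_cancel₀ _ ht]; ring
    have h2 : (1 : K) - x = 2 * t / (1 + t) := by
      rw [hxdef, eq_div_iff ht, sub_mul, div_mul_cancel₀ _ ht]; ring
    have hoc : ∀ u : V, outDeg (fun a b => A b a) u = inDeg A u := fun u => rfl
    have hic : ∀ u : V, inDeg (fun a b => A b a) u = outDeg A u := fun u => rfl
    have hmain := congrArg (Polynomial.aeval x) hP
    simp only [degPoly, map_sum, map_mul, map_pow, map_add, map_sub, map_one,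
      Polynomial.aeval_X, hoc, hic, h1, h2] at hmain
    have key : ∀ o i : ℕ, o + i = d →
        (2 / (1 + t)) ^ o * (2 * t / (1 + t)) ^ i = (2 ^ d / (1 + t) ^ d) * t ^ i := by
      intro o i h
      subst h
      rw [div_pow, div_pow, mul_pow, pow_add, pow_add, div_mul_div_comm, mul_div_right_comm]
      ring
    rw [Finset.sum_congr rfl (fun v _ => key _ _ (hreg v)),
        Finset.sum_congr rfl (fun v _ => key _ _ (by rw [Nat.add_comm]; exact hreg v))] at hmain
    rw [← Finset.mul_sum, ← Finset.mul_sum] at hmain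
    have h2K : (2 : K) ≠ 0 := by
      have h' : (2 : Polynomial ℚ) ≠ 0 := by norm_num
      have h2 := RatFunc.algebraMap_ne_zero h'
      rwa [map_ofNat] at h2
    have hc : (2 ^ d / (1 + t) ^ d : K) ≠ 0 :=
      div_ne_zero (pow_ne_zero _ h2K) (pow_ne_zero _ ht)
    have hsum : ∑ v : V, t ^ inDeg A v = ∑ v : V, t ^ outDeg A v :=
      mul_left_cancel₀ hc hmain
    have hpoly : ∑ v : V, (X : Polynomial ℚ) ^ outDeg A v
        = ∑ v : V, (X : Polynomial ℚ) ^ inDeg A v := by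
      apply RatFunc.algebraMap_injective ℚ
      simpa [map_sum, map_pow, htdef] using hsum.symm
    exact aux_sum_X_pow_eq _ _ hpoly
  refine ⟨part1, ?_⟩
  have hio : ∀ v : V, inDeg A v = d - outDeg A v := fun v => by have := hreg v; omega
  have hoi : ∀ v : V, outDeg A v = d - inDeg A v := fun v => by have := hreg v; omega
  have e1 : (Finset.univ.val.map fun v : V => (outDeg A v, inDeg A v)) =
      ((Finset.univ.val.map fun v : V => outDeg A v).map fun k => (k, d - k)) := by
    rw [Multiset.map_map]
    exact Multiset.map_congr rfl (fun v _ => by simp [hio v])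
  have e2 : (Finset.univ.val.map fun v : V => (inDeg A v, outDeg A v)) =
      ((Finset.univ.val.map fun v : V => inDeg A v).map fun k => (k, d - k)) := by
    rw [Multiset.map_map]
    exact Multiset.map_congr rfl (fun v _ => by simp [hoi v])
  rw [e1, e2, part1]
end
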